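/- The region outside the closed unit disk in the Euclidean plane is not intrinsically flat near the disk: there exist points P, Q with ‖P‖ > 1 and ‖Q‖ > 1 such that every continuous path from P to Q staying in {r : ‖r‖ > 1} has length strictly greater than ‖P − Q‖. -/

import Mathlib

open Set

/-- The exterior of the closed unit disk in the Euclidean plane is not convex:
there exist points `P`, `Q` outside the disk such that every continuous path
between them staying outside the disk is strictly longer than `‖P − Q‖`. -/
theorem exterior_of_disk_not_flat :
    ∃ P Q : EuclideanSpace ℝ (Fin 2), 1 < ‖P‖ ∧ 1 < ‖Q‖ ∧
      ∀ γ : ℝ → EuclideanSpace ℝ (Fin 2),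
        ContinuousOn γ (Set.Icc 0 1) → γ 0 = P → γ 1 = Q →
        (∀ t ∈ Set.Icc (0 : ℝ) 1, 1 < ‖γ t‖) →
        ENNReal.ofReal ‖P - Q‖ < eVariationOn γ (Set.Icc 0 1) := by
  set P : EuclideanSpace ℝ (Fin 2) := (WithLp.equiv 2 (Fin 2 → ℝ)).symm ![-2, 0] with hP
  set Q : EuclideanSpace ℝ (Fin 2) := (WithLp.equiv 2 (Fin 2 → ℝ)).symm ![2, 0] with hQ
  have hPnorm : ‖P‖ = 2 := by
    rw [EuclideanSpace.norm_eq]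
    simp [hP, Fin.sum_univ_two, WithLp.equiv_symm_apply, PiLp.toLp_apply]
  have hQnorm : ‖Q‖ = 2 := by
    rw [EuclideanSpace.norm_eq]
    simp [hQ, Fin.sum_univ_two, WithLp.equiv_symm_apply, PiLp.toLp_apply]
  refine ⟨P, Q, by simp [hPnorm], by simp [hQnorm], ?_⟩
  intro γ hcont h0 h1 hout
  -- find t with first coordinate 0
  have hproj : ContinuousOn (fun s => γ s 0) (Icc 0 1) :=
    (EuclideanSpace.proj (0 : Fin 2)).continuous.comp_continuousOn hcont
  have hiv : (0 : ℝ) ∈ Icc (γ 0 0) (γ 1 0) := by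
    constructor
    · rw [h0]; simp [hP, WithLp.equiv_symm_apply, PiLp.toLp_apply]
    · rw [h1]; simp [hQ, WithLp.equiv_symm_apply, PiLp.toLp_apply]
  obtain ⟨t, ht, htval⟩ := intermediate_value_Icc (by norm_num : (0:ℝ) ≤ 1) hproj hiv
  -- y coordinate
  set y : ℝ := γ t 1 with hy
  have hnormt : ‖γ t‖ = |y| := by
    rw [EuclideanSpace.norm_eq]
    simp [Fin.sum_univ_two, htval, Real.norm_eq_abs, sq_abs]
    rw [Real.sqrt_sq_eq_abs]
  have hy1 : 1 < |y| := by rw [← hnormt]; exact hout t ht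
  have hy2 : 1 < y ^ 2 := by nlinarith [sq_abs y, abs_nonneg y]
  -- distances
  have hdP : 2 < dist P (γ t) := by
    rw [dist_eq_norm, EuclideanSpace.norm_eq]
    simp [Fin.sum_univ_two, Real.norm_eq_abs, sq_abs]
    have e0 : P 0 - γ t 0 = -2 := by simp [hP, WithLp.equiv_symm_apply, PiLp.toLp_apply, htval]
    have e1 : P 1 - γ t 1 = -y := by simp [hP, WithLp.equiv_symm_apply, PiLp.toLp_apply, hy]
    rw [e0, e1]
    rw [Real.lt_sqrt (by norm_num)]
    nlinarith
  have hdQ : 2 < dist (γ t) Q := by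
    rw [dist_eq_norm, EuclideanSpace.norm_eq]
    simp [Fin.sum_univ_two, Real.norm_eq_abs, sq_abs]
    have e0 : γ t 0 - Q 0 = -2 := by simp [hQ, WithLp.equiv_symm_apply, PiLp.toLp_apply, htval]
    have e1 : γ t 1 - Q 1 = y := by simp [hQ, WithLp.equiv_symm_apply, PiLp.toLp_apply, hy]
    rw [e0, e1]
    rw [Real.lt_sqrt (by norm_num)]
    nlinarith
  have hPQ : ‖P - Q‖ = 4 := by
    rw [EuclideanSpace.norm_eq]
    simp [Fin.sum_univ_two, Real.norm_eq_abs, sq_abs]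
    have e0 : P 0 - Q 0 = -4 := by simp [hP, hQ, WithLp.equiv_symm_apply, PiLp.toLp_apply]; norm_num
    have e1 : P 1 - Q 1 = 0 := by simp [hP, hQ, WithLp.equiv_symm_apply, PiLp.toLp_apply]
    rw [e0, e1]
    rw [show (-4:ℝ)^2 + 0^2 = 4^2 by norm_num, Real.sqrt_sq (by norm_num)]
  -- variation split
  have hsplit : eVariationOn γ (Icc 0 t) + eVariationOn γ (Icc t 1) =
      eVariationOn γ (Icc 0 1) := by
    have h := eVariationOn.Icc_add_Icc γ (s := Icc 0 1) ht.1 ht.2 ht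
    simpa [Icc_inter_Icc, inf_of_le_left ht.2, sup_of_le_right ht.1,
      inf_of_le_right (le_refl (1:ℝ)), min_eq_right ht.2, max_eq_left ht.1] using h
  have hle1 : edist (γ 0) (γ t) ≤ eVariationOn γ (Icc 0 t) :=
    eVariationOn.edist_le γ ⟨le_refl 0, ht.1⟩ ⟨ht.1, le_refl t⟩
  have hle2 : edist (γ t) (γ 1) ≤ eVariationOn γ (Icc t 1) :=
    eVariationOn.edist_le γ ⟨le_refl t, ht.2⟩ ⟨ht.2, le_refl 1⟩
  calc ENNReal.ofReal ‖P - Q‖ = ENNReal.ofReal 2 + ENNReal.ofReal 2 := by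
        rw [hPQ, ← ENNReal.ofReal_add (by norm_num) (by norm_num)]; norm_num
    _ < ENNReal.ofReal (dist P (γ t)) + ENNReal.ofReal (dist (γ t) Q) :=
        ENNReal.add_lt_add (by rw [ENNReal.ofReal_lt_ofReal_iff (by linarith)]; exact hdP)
          (by rw [ENNReal.ofReal_lt_ofReal_iff (by linarith)]; exact hdQ)
    _ = edist (γ 0) (γ t) + edist (γ t) (γ 1) := by
        rw [h0, h1, edist_dist, edist_dist]
    _ ≤ eVariationOn γ (Icc 0 t) + eVariationOn γ (Icc t 1) := add_le_add hle1 hle2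
    _ = eVariationOn γ (Icc 0 1) := hsplit
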